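/- Let ρ be a density operator on a finite-dimensional Hilbert space, let ε ≥ 0, and let Π, Π_X, Π_Y, Π_{XY} be orthogonal projections each satisfying Tr{Πρ} ≥ 1 − ε, Tr{Π_X ρ} ≥ 1 − ε, Tr{Π_Y ρ} ≥ 1 − ε, and Tr{Π_{XY} ρ} ≥ 1 − ε. Then Tr{ Π Π_X Π_{XY} Π_X Π · Π_Y ρ Π_Y } ≥ 1 − ε − 6√ε. -/

import Mathlib

open scoped BigOperators ComplexOrder

noncomputable section

/-- Positive semidefinite square root, as defined in the older Mathlib
(`Matrix.PosSemidef.sqrt`, since removed). -/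
def Matrix.PosSemidef.sqrt {n 𝕜 : Type*} [Fintype n] [DecidableEq n] [RCLike 𝕜]
    {A : Matrix n n 𝕜} (hA : A.PosSemidef) : Matrix n n 𝕜 :=
  hA.1.eigenvectorUnitary.1 * Matrix.diagonal ((↑) ∘ Real.sqrt ∘ hA.1.eigenvalues) *
    (star hA.1.eigenvectorUnitary : Matrix n n 𝕜)

namespace QIC

/-- von Neumann entropy in bits, via eigenvalues (convention `0·log 0 = 0`). -/
def vnEntropy {m : Type*} [Fintype m] [DecidableEq m] (ρ : Matrix m m ℂ) : ℝ :=
  if h : ρ.IsHermitian then -∑ i, h.eigenvalues i * Real.logb 2 (h.eigenvalues i) else 0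

/-- min-entropy in bits: `−log₂` of the largest eigenvalue. -/
def minEntropy {m : Type*} [Fintype m] [DecidableEq m] (ρ : Matrix m m ℂ) : ℝ :=
  if h : ρ.IsHermitian then -Real.logb 2 (⨆ i, h.eigenvalues i) else 0

/-- A density operator: positive semidefinite with unit trace. -/
def IsDensity {m : Type*} [Fintype m] [DecidableEq m] (ρ : Matrix m m ℂ) : Prop :=
  ρ.PosSemidef ∧ ρ.trace = 1

/-- A POVM: a finite family of positive semidefinite operators summing to the identity. -/
def IsPOVM {ι m : Type*} [Fintype ι] [Fintype m] [DecidableEq m]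
    (Λ : ι → Matrix m m ℂ) : Prop :=
  (∀ i, (Λ i).PosSemidef) ∧ ∑ i, Λ i = 1

/-- A probability distribution on a finite alphabet. -/
def IsProbDist {X : Type*} [Fintype X] (p : X → ℝ) : Prop :=
  (∀ x, 0 ≤ p x) ∧ ∑ x, p x = 1

/-- `n`-fold tensor product of matrices on `Fin d`. -/
def tensorPow {d n : ℕ} (f : Fin n → Matrix (Fin d) (Fin d) ℂ) :
    Matrix (Fin n → Fin d) (Fin n → Fin d) ℂ :=
  Matrix.of fun i j => ∏ k, f k (i k) (j k)

/-- Positive semidefinite square root (zero on non-PSD matrices). -/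
def msqrt {m : Type*} [Fintype m] [DecidableEq m] (X : Matrix m m ℂ) : Matrix m m ℂ :=
  open Classical in if h : X.PosSemidef then h.sqrt else 0

/-- Trace norm `‖X‖₁ = Tr √(XᴴX)`. -/
def traceNorm {m : Type*} [Fintype m] [DecidableEq m] (X : Matrix m m ℂ) : ℝ :=
  (Matrix.posSemidef_conjTranspose_mul_self X).sqrt.trace.re

/-- Loewner order: `A ≤ B` iff `B − A` is positive semidefinite. -/
def loewnerLE {m : Type*} [Fintype m] [DecidableEq m] (A B : Matrix m m ℂ) : Prop :=
  (B - A).PosSemidef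


open Matrix

section AuxFrob

attribute [local instance] Matrix.frobeniusSeminormedAddCommGroup

variable {m : Type*} [Fintype m] [DecidableEq m]

lemma fnorm_sq_eq (A : Matrix m m ℂ) : ‖A‖ ^ 2 = ((Aᴴ * A).trace).re := by
  rw [Matrix.frobenius_norm_def, ← Real.rpow_natCast _ 2, ← Real.rpow_mul (by positivity)]
  norm_num
  rw [Matrix.trace, Complex.re_sum]
  rw [Finset.sum_comm]
  refine Finset.sum_congr rfl fun i _ => ?_
  rw [Matrix.diag_apply, Matrix.mul_apply, Complex.re_sum]
  refine Finset.sum_congr rfl fun j _ => ?_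
  rw [Matrix.conjTranspose_apply]
  simp [Complex.sq_norm, Complex.normSq_apply, Complex.mul_re]

lemma fnorm_proj_sq (Q A : Matrix m m ℂ) (hH : Q.IsHermitian) (hQ : Q * Q = Q) :
    ‖Q * A‖ ^ 2 = ((Aᴴ * (Q * A)).trace).re := by
  rw [fnorm_sq_eq]
  congr 2
  rw [Matrix.conjTranspose_mul, hH.eq, Matrix.mul_assoc, ← Matrix.mul_assoc Q Q A, hQ]

lemma proj_pyth (Q A : Matrix m m ℂ) (hH : Q.IsHermitian) (hQ : Q * Q = Q) :
    ‖Q * A‖ ^ 2 + ‖(1 - Q) * A‖ ^ 2 = ‖A‖ ^ 2 := by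
  have hH' : (1 - Q).IsHermitian := Matrix.isHermitian_one.sub hH
  have hQ' : (1 - Q) * (1 - Q) = 1 - Q := by
    simp [sub_mul, mul_sub, hQ]
  rw [fnorm_proj_sq Q A hH hQ, fnorm_proj_sq _ A hH' hQ', fnorm_sq_eq]
  rw [← Complex.add_re, ← Matrix.trace_add, ← Matrix.mul_add]
  rw [show Q * A + (1 - Q) * A = A by rw [sub_mul, one_mul]; abel]

lemma fnorm_proj_le (Q A : Matrix m m ℂ) (hH : Q.IsHermitian) (hQ : Q * Q = Q) :
    ‖Q * A‖ ≤ ‖A‖ := by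
  have h := proj_pyth Q A hH hQ
  nlinarith [norm_nonneg (Q * A), norm_nonneg A, sq_nonneg ‖(1 - Q) * A‖]

end AuxFrob

private lemma final_numeric (ε t s N : ℝ) (hε : 0 ≤ ε) (ht0 : 0 ≤ t) (ht2 : t ^ 2 = ε)
    (hs0 : 0 ≤ s) (hs1 : s ≤ 1) (hs2 : 1 - ε ≤ s ^ 2) (hN0 : 0 ≤ N) (hNs : s - 3 * t ≤ N) :
    1 - ε - 6 * t ≤ N ^ 2 := by
  rcases le_or_gt (1 - ε - 6 * t) 0 with hcase | hcase
  · linarith [sq_nonneg N]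
  · have ht16 : t < 1 / 6 := by linarith
    have h9 : 9 * t ^ 2 ≤ 6 * t := by nlinarith
    have hst : 3 * t ≤ s := by nlinarith [sq_nonneg (s - 3 * t), sq_nonneg (s + 3 * t)]
    have hN2 : (s - 3 * t) ^ 2 ≤ N ^ 2 := pow_le_pow_left₀ (by linarith) hNs 2
    have hexp : (s - 3 * t) ^ 2 = s ^ 2 - 6 * (s * t) + 9 * t ^ 2 := by ring
    have hstt : s * t ≤ t := mul_le_of_le_one_left ht0 hs1
    linarith [sq_nonneg t]

/-- **Key intermediate estimate in the two-sender simultaneous decoder error analysis.**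
If `Π`, `Π_X`, `Π_Y`, `Π_{XY}` are orthogonal projections each succeeding with probability
at least `1 − ε` on a density operator `ρ`, then
`Tr{ Π Π_X Π_{XY} Π_X Π ⬝ Π_Y ρ Π_Y } ≥ 1 − ε − 6√ε`. -/
theorem projector_sandwich_estimate
    {m : Type*} [Fintype m] [DecidableEq m]
    (ρ : Matrix m m ℂ) (hρ : IsDensity ρ)
    (ε : ℝ) (hε : 0 ≤ ε)
    (P PX PY PXY : Matrix m m ℂ)
    (hP : P.IsHermitian) (hPproj : P * P = P)
    (hPX : PX.IsHermitian) (hPXproj : PX * PX = PX)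
    (hPY : PY.IsHermitian) (hPYproj : PY * PY = PY)
    (hPXY : PXY.IsHermitian) (hPXYproj : PXY * PXY = PXY)
    (h1 : 1 - ε ≤ ((P * ρ).trace).re)
    (h2 : 1 - ε ≤ ((PX * ρ).trace).re)
    (h3 : 1 - ε ≤ ((PY * ρ).trace).re)
    (h4 : 1 - ε ≤ ((PXY * ρ).trace).re) :
    1 - ε - 6 * Real.sqrt ε ≤
      (((P * PX * PXY * PX * P) * (PY * ρ * PY)).trace).re := by
  classical
  letI := Matrix.frobeniusSeminormedAddCommGroup (α := ℂ) (m := m) (n := m)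
  obtain ⟨hpsd, htr⟩ := hρ
  set S : Matrix m m ℂ := hpsd.sqrt with hSdef
  have hSS : S * S = ρ := by
    conv_rhs => rw [hpsd.1.spectral_theorem, Unitary.conjStarAlgAut_apply]
    rw [hSdef, Matrix.PosSemidef.sqrt]
    simp only [Matrix.mul_assoc]
    congr 1
    rw [← Matrix.mul_assoc (star _ : Matrix m m ℂ), Unitary.coe_star_mul_self, Matrix.one_mul,
      ← Matrix.mul_assoc, Matrix.diagonal_mul_diagonal]
    congr 2
    funext i
    simp only [Function.comp_apply]
    rw [← RCLike.ofReal_mul, Real.mul_self_sqrt (hpsd.eigenvalues_nonneg i)]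
  have hSH : S.IsHermitian := by
    rw [hSdef, Matrix.PosSemidef.sqrt, Matrix.IsHermitian]
    simp [Matrix.mul_assoc, ← Matrix.star_eq_conjTranspose, Function.comp_def]
    congr 2
    rw [Matrix.star_eq_conjTranspose, Matrix.diagonal_conjTranspose]
    congr 1
    funext x
    simp
  -- ‖S‖² = 1
  have hSnorm : ‖S‖ ^ 2 = 1 := by
    rw [fnorm_sq_eq, hSH.eq, hSS, htr]
    simp
  -- trace of Q ρ as squared norm
  have trace_eq : ∀ Q : Matrix m m ℂ, Q.IsHermitian → Q * Q = Q →
      ((Q * ρ).trace).re = ‖Q * S‖ ^ 2 := by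
    intro Q hH hQ
    rw [fnorm_proj_sq Q S hH hQ, hSH.eq, ← Matrix.mul_assoc, Matrix.trace_mul_cycle, hSS,
      Matrix.trace_mul_comm]
  -- residual bounds
  have resid : ∀ Q : Matrix m m ℂ, Q.IsHermitian → Q * Q = Q →
      1 - ε ≤ ((Q * ρ).trace).re → ‖(1 - Q) * S‖ ≤ Real.sqrt ε := by
    intro Q hH hQ hQtr
    have hp := proj_pyth Q S hH hQ
    rw [trace_eq Q hH hQ] at hQtr
    have h1 : ‖(1 - Q) * S‖ ^ 2 ≤ ε := by nlinarith
    calc ‖(1 - Q) * S‖ = Real.sqrt (‖(1 - Q) * S‖ ^ 2) := by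
          rw [Real.sqrt_sq (norm_nonneg _)]
      _ ≤ Real.sqrt ε := Real.sqrt_le_sqrt h1
  have hrP := resid P hP hPproj h1
  have hrPX := resid PX hPX hPXproj h2
  have hrPY := resid PY hPY hPYproj h3
  -- lower bound for ‖PXY * S‖
  have hPXYS : Real.sqrt (1 - ε) ≤ ‖PXY * S‖ := by
    have := (trace_eq PXY hPXY hPXYproj) ▸ h4
    calc Real.sqrt (1 - ε) ≤ Real.sqrt (‖PXY * S‖ ^ 2) := Real.sqrt_le_sqrt this
      _ = ‖PXY * S‖ := Real.sqrt_sq (norm_nonneg _)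
  -- the target trace equals ‖B‖²
  set B : Matrix m m ℂ := PXY * (PX * (P * (PY * S))) with hBdef
  have key : (((P * PX * PXY * PX * P) * (PY * ρ * PY)).trace).re = ‖B‖ ^ 2 := by
    rw [fnorm_sq_eq]
    congr 1
    have hcol : ∀ X : Matrix m m ℂ, PXY * (PXY * X) = PXY * X := fun X => by
      rw [← Matrix.mul_assoc, hPXYproj]
    have hBB : Bᴴ * B = (S * PY) * (P * (PX * (PXY * (PX * (P * (PY * S)))))) := by
      simp only [hBdef, Matrix.conjTranspose_mul, hP.eq, hPX.eq, hPY.eq, hPXY.eq, hSH.eq,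
        Matrix.mul_assoc, hcol]
    rw [hBB, Matrix.trace_mul_comm (S * PY) (P * (PX * (PXY * (PX * (P * (PY * S)))))), ← hSS]
    show _ = _
    simp only [Matrix.mul_assoc]
  rw [key]
  -- chain of triangle inequalities
  have contraction3 : ∀ A : Matrix m m ℂ, ‖PXY * (PX * (P * A))‖ ≤ ‖A‖ := by
    intro A
    calc ‖PXY * (PX * (P * A))‖ ≤ ‖PX * (P * A)‖ := fnorm_proj_le _ _ hPXY hPXYproj
      _ ≤ ‖P * A‖ := fnorm_proj_le _ _ hPX hPXproj
      _ ≤ ‖A‖ := fnorm_proj_le _ _ hP hPproj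
  have step1 : ‖PXY * (PX * (P * S))‖ - Real.sqrt ε ≤ ‖B‖ := by
    have hsplit : PXY * (PX * (P * S)) = B + PXY * (PX * (P * ((1 - PY) * S))) := by
      rw [hBdef]; simp only [sub_mul, one_mul, mul_sub]; abel
    have := norm_add_le B (PXY * (PX * (P * ((1 - PY) * S))))
    have h2' := le_trans (contraction3 ((1 - PY) * S)) hrPY
    rw [← hsplit] at this
    linarith
  have step2 : ‖PXY * (PX * S)‖ - Real.sqrt ε ≤ ‖PXY * (PX * (P * S))‖ := by
    have hsplit : PXY * (PX * S) = PXY * (PX * (P * S)) + PXY * (PX * ((1 - P) * S)) := by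
      simp only [sub_mul, one_mul, mul_sub]; abel
    have := norm_add_le (PXY * (PX * (P * S))) (PXY * (PX * ((1 - P) * S)))
    have h2' : ‖PXY * (PX * ((1 - P) * S))‖ ≤ Real.sqrt ε := by
      refine le_trans ?_ hrP
      calc ‖PXY * (PX * ((1 - P) * S))‖ ≤ ‖PX * ((1 - P) * S)‖ :=
            fnorm_proj_le _ _ hPXY hPXYproj
        _ ≤ ‖(1 - P) * S‖ := fnorm_proj_le _ _ hPX hPXproj
    rw [← hsplit] at this
    linarith
  have step3 : ‖PXY * S‖ - Real.sqrt ε ≤ ‖PXY * (PX * S)‖ := by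
    have hsplit : PXY * S = PXY * (PX * S) + PXY * ((1 - PX) * S) := by
      simp only [sub_mul, one_mul, mul_sub]; abel
    have := norm_add_le (PXY * (PX * S)) (PXY * ((1 - PX) * S))
    have h2' : ‖PXY * ((1 - PX) * S)‖ ≤ Real.sqrt ε :=
      le_trans (fnorm_proj_le _ _ hPXY hPXYproj) hrPX
    rw [← hsplit] at this
    linarith
  refine final_numeric ε (Real.sqrt ε) (Real.sqrt (1 - ε)) ‖B‖ hε (Real.sqrt_nonneg _)
    (Real.sq_sqrt hε) (Real.sqrt_nonneg _) (Real.sqrt_le_one.mpr (by linarith)) ?_ (norm_nonneg _)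
    (by linarith [hPXYS])
  rcases le_or_gt ε 1 with h | h
  · rw [Real.sq_sqrt (by linarith)]
  · rw [show Real.sqrt (1 - ε) = 0 from Real.sqrt_eq_zero'.mpr (by linarith)]
    nlinarith

end QIC
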